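/- Let E be a phase observable with phase matrix (c_{n,m}) satisfying c_{n,m} ≠ 0 for all n, m ≥ 0. Then the only vector φ with P_n E(X)φ = E(X) P_n φ for all n ∈ ℕ and all Borel X ⊆ [0,2π) is φ = 0. In particular, the canonical phase E_can (c_{n,m} ≡ 1) commutes with the number observable in no nonzero vector state. -/

import Mathlib

open MeasureTheory Complex

/-- `phaseInt X n m = (1/2π) ∫_X e^{i(n-m)x} dx`. -/
noncomputable def phaseInt (X : Set ℝ) (n m : ℕ) : ℂ :=
  ((1 / (2 * Real.pi) : ℝ) : ℂ) *
    ∫ x in X, Complex.exp (Complex.I * ((n : ℂ) - (m : ℂ)) * (x : ℂ))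

lemma phaseInt_succ_ne_zero (n : ℕ) :
    phaseInt (Set.Ico 0 Real.pi) (n + 1) n ≠ 0 := by
  have hcast : ((n + 1 : ℕ) : ℂ) - (n : ℂ) = 1 := by push_cast; ring
  have hint : (∫ x in Set.Ico (0:ℝ) Real.pi,
      Complex.exp (Complex.I * (((n + 1 : ℕ) : ℂ) - (n : ℂ)) * (x : ℂ)))
      = ∫ x in (0:ℝ)..Real.pi, Complex.exp (Complex.I * (x : ℂ)) := by
    rw [MeasureTheory.setIntegral_congr_set MeasureTheory.Ico_ae_eq_Ioc,
      intervalIntegral.integral_of_le Real.pi_pos.le]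
    simp [hcast]
  have hval : (∫ x in (0:ℝ)..Real.pi, Complex.exp (Complex.I * (x : ℂ)))
      = (Complex.exp (Complex.I * Real.pi) - Complex.exp (Complex.I * 0)) / Complex.I :=
    integral_exp_mul_complex Complex.I_ne_zero
  have hexp : Complex.exp (Complex.I * Real.pi) = -1 := by
    rw [mul_comm]; exact Complex.exp_pi_mul_I
  unfold phaseInt
  rw [hint, hval, hexp]
  simp only [mul_zero, Complex.exp_zero]
  intro h
  rcases mul_eq_zero.mp h with h1 | h2
  · exact (div_ne_zero one_ne_zero (by positivity : (2 * Real.pi : ℝ) ≠ 0))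
      (by exact_mod_cast h1)
  · apply div_ne_zero _ Complex.I_ne_zero h2
    norm_num
theorem stmt13 {H : Type*} [NormedAddCommGroup H] [InnerProductSpace ℂ H] [CompleteSpace H]
    (e : HilbertBasis ℕ ℂ H) (ξ : ℕ → H) (hξ : ∀ n, ‖ξ n‖ = 1)
    (c : ℕ → ℕ → ℂ) (hc : ∀ n m, c n m = (inner ℂ (ξ n) (ξ m) : ℂ))
    (hnz : ∀ n m : ℕ, c n m ≠ 0)
    (E : Set ℝ → (H →L[ℂ] H))
    (hE : ∀ X : Set ℝ, MeasurableSet X → X ⊆ Set.Ico 0 (2 * Real.pi) → ∀ n m : ℕ,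
      (inner ℂ (e n) (E X (e m)) : ℂ) = c n m * phaseInt X n m)
    (φ : H)
    (hcomm : ∀ (n : ℕ) (X : Set ℝ), MeasurableSet X → X ⊆ Set.Ico 0 (2 * Real.pi) →
      (inner ℂ (e n) (E X φ) : ℂ) • (e n : H) = E X ((inner ℂ (e n) φ : ℂ) • (e n : H))) :
    φ = 0 := by
  set X : Set ℝ := Set.Ico 0 Real.pi with hX
  have hmeas : MeasurableSet X := measurableSet_Ico
  have hsub : X ⊆ Set.Ico 0 (2 * Real.pi) :=
    Set.Ico_subset_Ico le_rfl (by nlinarith [Real.pi_pos])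
  have hcoef : ∀ n : ℕ, (inner ℂ (e n) φ : ℂ) = 0 := by
    intro n
    have h := hcomm n X hmeas hsub
    have h2 : (inner ℂ (e (n + 1)) ((inner ℂ (e n) (E X φ) : ℂ) • (e n : H)) : ℂ)
        = inner ℂ (e (n + 1)) (E X ((inner ℂ (e n) φ : ℂ) • (e n : H))) := by rw [h]
    rw [inner_smul_right, (E X).map_smul, inner_smul_right] at h2
    have horth : (inner ℂ (e (n + 1)) (e n : H) : ℂ) = 0 := by
      exact e.orthonormal.2 (by omega : (n + 1 : ℕ) ≠ n)
    rw [horth, mul_zero, hE X hmeas hsub (n + 1) n] at h2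
    have := h2.symm
    rcases mul_eq_zero.mp this with h3 | h4
    · exact h3
    · exact absurd h4 (mul_ne_zero (hnz (n + 1) n) (phaseInt_succ_ne_zero n))
  apply e.repr.injective
  ext n
  simp [e.repr_apply_apply, hcoef n]
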